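/- Let R be a ring, I an ideal, and e, f idempotents with eR ≅ fR. If every isomorphism ē R̄ → f̄ R̄ lifts to an isomorphism eR → fR (i.e., for all x ∈ f̄ R̄ ē, y ∈ ē R̄ f̄ with xy = f̄, yx = ē there exist u ∈ eRf, v ∈ fRe with uv = e, vu = f, v̄ = x), then every unit of ē R̄ ē lifts to a unit of eRe. -/
import Mathlib


/-- Let `π : R → S` be a surjective ring homomorphism (the quotient map
`R → R/I`), and `e, f` idempotents of `R` with `eR ≅ fR`. If every right-module
isomorphism `(π e)S → (π f)S` lifts to an isomorphism `eR → fR`, then every unit of the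
corner `(π e) S (π e)` lifts to a unit of `eRe`. -/
theorem stmt_13 {R S : Type*} [Ring R] [Ring S] (π : R →+* S)
    (hsurj : Function.Surjective π)
    (e f : R) (he : IsIdempotentElem e) (hf : IsIdempotentElem f)
    (a b : R) (ha : e * a * f = a) (hb : f * b * e = b)
    (hab : a * b = e) (hba : b * a = f)
    (hlift : ∀ x y : S, π f * x * π e = x → π e * y * π f = y → x * y = π f →
      y * x = π e →
      ∃ u v : R, e * u * f = u ∧ f * v * e = v ∧ u * v = e ∧ v * u = f ∧ π v = x) :
    ∀ w : S, π e * w * π e = w →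
      (∃ w' : S, π e * w' * π e = w' ∧ w * w' = π e ∧ w' * w = π e) →
      ∃ v : R, e * v * e = v ∧ (∃ v' : R, e * v' * e = v' ∧ v * v' = e ∧ v' * v = e) ∧
        π v = w := by
  rintro w hw ⟨w', hw', hww', hw'w⟩
  have hπe : π e * π e = π e := by rw [← map_mul, he]
  have hea : e * a = a := by
    conv_lhs => rw [← ha]
    rw [← mul_assoc, ← mul_assoc, he, ha]
  have haf : a * f = a := by
    conv_lhs => rw [← ha]
    rw [mul_assoc, hf, ha]
  have hfb : f * b = b := by
    conv_lhs => rw [← hb]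
    rw [← mul_assoc, ← mul_assoc, hf, hb]
  have hbe : b * e = b := by
    conv_lhs => rw [← hb]
    rw [mul_assoc, he, hb]
  have hew : π e * w = w := by
    conv_lhs => rw [← hw]
    rw [← mul_assoc, ← mul_assoc, hπe, hw]
  have hwe : w * π e = w := by
    conv_lhs => rw [← hw]
    rw [mul_assoc, hπe, hw]
  have hew' : π e * w' = w' := by
    conv_lhs => rw [← hw']
    rw [← mul_assoc, ← mul_assoc, hπe, hw']
  have hw'e : w' * π e = w' := by
    conv_lhs => rw [← hw']
    rw [mul_assoc, hπe, hw']
  have hx : π f * (π b * w) * π e = π b * w := by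
    rw [← mul_assoc, ← map_mul, hfb, mul_assoc, hwe]
  have hy : π e * (w' * π a) * π f = w' * π a := by
    rw [← mul_assoc, hew', mul_assoc, ← map_mul, haf]
  have hxy : (π b * w) * (w' * π a) = π f := by
    rw [mul_assoc, ← mul_assoc w, hww', ← map_mul, hea, ← map_mul, hba]
  have hyx : (w' * π a) * (π b * w) = π e := by
    rw [mul_assoc, ← mul_assoc (π a), ← map_mul, hab, hew, hw'w]
  obtain ⟨u, v, hu, hv, huv, hvu, hπv⟩ := hlift _ _ hx hy hxy hyx
  have heu : e * u = u := by
    conv_lhs => rw [← hu]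
    rw [← mul_assoc, ← mul_assoc, he, hu]
  have hfv : f * v = v := by
    conv_lhs => rw [← hv]
    rw [← mul_assoc, ← mul_assoc, hf, hv]
  have hve : v * e = v := by
    conv_lhs => rw [← hv]
    rw [mul_assoc, he, hv]
  refine ⟨a * v, ?_, ⟨u * b, ?_, ?_, ?_⟩, ?_⟩
  · rw [← mul_assoc, hea, mul_assoc, hve]
  · rw [← mul_assoc, heu, mul_assoc, hbe]
  · rw [mul_assoc, ← mul_assoc v, hvu, hfb, hab]
  · rw [mul_assoc, ← mul_assoc b, hba, hfv, huv]
  · rw [map_mul, hπv, ← mul_assoc, ← map_mul, hab, hew]
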